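/- The bottleneck distance is an extended metric on the set of finite barcodes: it is symmetric, satisfies d_bot(B, B) = 0 and the triangle inequality d_bot(B1, B3) ≤ d_bot(B1, B2) + d_bot(B2, B3), and it separates points, i.e. if d_bot(B1, B2) = 0 for finite barcodes B1, B2 then B1 = B2. -/

import Mathlib

open scoped ENNReal Classical

/-- A bar `(a, b]` with `-∞ ≤ a ≤ b ≤ +∞`, encoded by its pair of endpoints in `EReal`. -/
abbrev Bar : Type := EReal × EReal

/-- The distance `|x - y|` between two extended-real endpoints, with the conventions that
equal endpoints (possibly infinite) are at distance `0` and distinct endpoints one of which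
is infinite are at distance `∞`. -/
noncomputable def erealDist (x y : EReal) : ℝ≥0∞ :=
  if x = y then 0
  else if x = ⊤ ∨ x = ⊥ ∨ y = ⊤ ∨ y = ⊥ then ⊤
  else ENNReal.ofReal |x.toReal - y.toReal|

/-- `d((a,b], (c,d]) = max (|c - a|) (|d - b|)`. -/
noncomputable def barDist (I J : Bar) : ℝ≥0∞ :=
  max (erealDist I.1 J.1) (erealDist I.2 J.2)

/-- The length of the bar `(a, b]`. -/
noncomputable def barLength (I : Bar) : ℝ≥0∞ := erealDist I.1 I.2

/-- A (finite) barcode: an equivalence class of finite families of intervals, described by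
its canonical representative, the finite multiset of its nontrivial intervals. -/
structure Barcode where
  bars : Multiset Bar
  nontrivial : ∀ I ∈ bars, I.1 < I.2

/-- The multiset of nontrivial intervals of a family of intervals. -/
noncomputable def reduceBars (s : Multiset Bar) : Multiset Bar :=
  s.filter fun I => I.1 < I.2

/-- A finite family of intervals (possibly containing trivial intervals) represents the
barcode `B` if its nontrivial intervals are exactly those of `B`. -/
def Represents (s : Multiset Bar) (B : Barcode) : Prop :=
  (∀ I ∈ s, I.1 ≤ I.2) ∧ reduceBars s = B.bars

/-- A partial matching between two families of intervals, realizing the bound `ε`: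
a bijection between sub-families moving intervals at most `ε`, all remaining intervals
having length at most `2ε`. -/
def IsPartialMatching (s t : Multiset Bar) (ε : ℝ≥0∞) : Prop :=
  ∃ P : Multiset (Bar × Bar),
    P.map Prod.fst ≤ s ∧ P.map Prod.snd ≤ t ∧
    (∀ p ∈ P, barDist p.1 p.2 ≤ ε) ∧
    (∀ I ∈ s - P.map Prod.fst, barLength I ≤ 2 * ε) ∧
    (∀ I ∈ t - P.map Prod.snd, barLength I ≤ 2 * ε)

/-- The bottleneck distance between two barcodes. -/
noncomputable def dBot (B1 B2 : Barcode) : ℝ≥0∞ :=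
  sInf {ε : ℝ≥0∞ | ∃ s t : Multiset Bar,
    Represents s B1 ∧ Represents t B2 ∧ IsPartialMatching s t ε}

/-! ### Auxiliary lemmas -/

lemma erealDist_self (x : EReal) : erealDist x x = 0 := by simp [erealDist]

lemma erealDist_comm (x y : EReal) : erealDist x y = erealDist y x := by
  by_cases h : x = y
  · simp [erealDist, h]
  · by_cases h2 : x = ⊤ ∨ x = ⊥ ∨ y = ⊤ ∨ y = ⊥
    · have h3 : y = ⊤ ∨ y = ⊥ ∨ x = ⊤ ∨ x = ⊥ := by tauto
      simp only [erealDist, if_neg h, if_neg (Ne.symm h), if_pos h2, if_pos h3]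
    · have h3 : ¬ (y = ⊤ ∨ y = ⊥ ∨ x = ⊤ ∨ x = ⊥) := by tauto
      simp only [erealDist, if_neg h, if_neg (Ne.symm h), if_neg h2, if_neg h3]
      rw [abs_sub_comm]

lemma erealDist_eq_zero {x y : EReal} (h : erealDist x y = 0) : x = y := by
  by_contra hxy
  by_cases h2 : x = ⊤ ∨ x = ⊥ ∨ y = ⊤ ∨ y = ⊥
  · simp [erealDist, hxy, h2] at h
  · push_neg at h2
    simp only [erealDist, if_neg hxy, if_neg (by tauto : ¬(x = ⊤ ∨ x = ⊥ ∨ y = ⊤ ∨ y = ⊥)),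
      ENNReal.ofReal_eq_zero, abs_nonpos_iff, sub_eq_zero] at h
    obtain ⟨hx1, hx2, hy1, hy2⟩ := h2
    exact hxy (by rw [← EReal.coe_toReal hx1 hx2, ← EReal.coe_toReal hy1 hy2, h])

lemma erealDist_triangle (x y z : EReal) : erealDist x z ≤ erealDist x y + erealDist y z := by
  by_cases hxz : x = z
  · simp [hxz, erealDist_self]
  by_cases hxy : x = y
  · simp [hxy]
  by_cases hyz : y = z
  · simp [hyz]
  by_cases hy : y = ⊤ ∨ y = ⊥
  · have : erealDist x y = ⊤ := by simp [erealDist, hxy]; tauto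
    simp [this]
  by_cases hx : x = ⊤ ∨ x = ⊥
  · have : erealDist x y = ⊤ := by simp [erealDist, hxy]; tauto
    simp [this]
  by_cases hz : z = ⊤ ∨ z = ⊥
  · have : erealDist y z = ⊤ := by simp [erealDist, hyz]; tauto
    simp [this]
  · have hc : ∀ a b : EReal, a ≠ b → ¬(a = ⊤ ∨ a = ⊥) → ¬(b = ⊤ ∨ b = ⊥) →
        erealDist a b = ENNReal.ofReal |a.toReal - b.toReal| := by
      intro a b hab ha hb
      simp only [erealDist, if_neg hab, if_neg (by tauto : ¬(a = ⊤ ∨ a = ⊥ ∨ b = ⊤ ∨ b = ⊥))]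
    rw [hc x z hxz hx hz, hc x y hxy hx hy, hc y z hyz hy hz,
      ← ENNReal.ofReal_add (abs_nonneg _) (abs_nonneg _)]
    exact ENNReal.ofReal_le_ofReal (abs_sub_le _ _ _)

lemma barDist_self (I : Bar) : barDist I I = 0 := by simp [barDist, erealDist_self]

lemma barDist_comm (I J : Bar) : barDist I J = barDist J I := by
  simp [barDist, erealDist_comm I.1 J.1, erealDist_comm I.2 J.2]

lemma barDist_eq_zero {I J : Bar} (h : barDist I J = 0) : I = J := by
  have h1 : erealDist I.1 J.1 = 0 := le_antisymm (h ▸ le_max_left _ _) zero_le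
  have h2 : erealDist I.2 J.2 = 0 := le_antisymm (h ▸ le_max_right _ _) zero_le
  exact Prod.ext (erealDist_eq_zero h1) (erealDist_eq_zero h2)

lemma barDist_triangle (I J K : Bar) : barDist I K ≤ barDist I J + barDist J K := by
  refine max_le ?_ ?_
  · exact le_trans (erealDist_triangle I.1 J.1 K.1)
      (add_le_add (le_max_left _ _) (le_max_left _ _))
  · exact le_trans (erealDist_triangle I.2 J.2 K.2)
      (add_le_add (le_max_right _ _) (le_max_right _ _))

lemma barLength_le (I J : Bar) : barLength I ≤ barLength J + 2 * barDist I J := by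
  have h1 : erealDist I.1 I.2 ≤ erealDist I.1 J.1 + erealDist J.1 J.2 + erealDist J.2 I.2 :=
    le_trans (erealDist_triangle I.1 J.1 I.2)
      (by exact add_le_add_right (erealDist_triangle J.1 J.2 I.2) _ |>.trans (by rw [add_assoc]))
  calc barLength I ≤ erealDist I.1 J.1 + erealDist J.1 J.2 + erealDist J.2 I.2 := h1
    _ ≤ barDist I J + barLength J + barDist I J := by
        refine add_le_add (add_le_add (le_max_left _ _) le_rfl) ?_
        rw [erealDist_comm]; exact le_max_right _ _
    _ = barLength J + 2 * barDist I J := by ring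

/-! ### Multiset lemmas -/

lemma msub_decomp {α : Type*} [DecidableEq α] (m r s : Multiset α) (h : m + r ≤ s) :
    s - m = (s - (m + r)) + r := by
  ext a
  have hc := Multiset.le_iff_count.1 h a
  simp only [Multiset.count_add] at hc
  simp only [Multiset.count_sub, Multiset.count_add]
  omega

lemma mextract {α β : Type*} [DecidableEq α] (f : α → β) :
    ∀ (m : Multiset β) (P : Multiset α), m ≤ P.map f → ∃ Q R, P = Q + R ∧ Q.map f = m := by
  intro m
  induction m using Multiset.induction_on with
  | empty => exact fun P _ => ⟨0, P, by simp, by simp⟩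
  | cons b m ih =>
    intro P h
    have hb : b ∈ P.map f := Multiset.mem_of_le h (Multiset.mem_cons_self _ _)
    obtain ⟨q, hq, rfl⟩ := Multiset.mem_map.1 hb
    have hPe : P = q ::ₘ P.erase q := (Multiset.cons_erase hq).symm
    have hmap : P.map f = f q ::ₘ (P.erase q).map f := by
      conv_lhs => rw [hPe]
      simp
    rw [hmap] at h
    have h' : m ≤ (P.erase q).map f := (Multiset.cons_le_cons_iff _).1 h
    obtain ⟨Q, R, hQR, hQm⟩ := ih (P.erase q) h'
    exact ⟨q ::ₘ Q, R, by rw [hPe, hQR, Multiset.cons_add], by simp [hQm]⟩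

lemma msplit {α β : Type*} [DecidableEq α] [DecidableEq β] (f : α → β) :
    ∀ (P : Multiset α) (m2 T : Multiset β), P.map f ≤ T → m2 ≤ T →
    ∃ Q R, P = Q + R ∧ Q.map f ≤ m2 ∧ R.map f ≤ T - m2 := by
  intro P
  induction P using Multiset.induction_on with
  | empty => exact fun m2 T _ _ => ⟨0, 0, by simp, by simp, by simp⟩
  | cons p P ih =>
    intro m2 T h hm2
    have hp : f p ∈ T := Multiset.mem_of_le h (by simp)
    have hP : P.map f ≤ T.erase (f p) := by
      have : f p ::ₘ P.map f ≤ f p ::ₘ T.erase (f p) := by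
        rw [Multiset.cons_erase hp]; simpa using h
      exact (Multiset.cons_le_cons_iff _).1 this
    by_cases hb : f p ∈ m2
    · have hm2' : m2.erase (f p) ≤ T.erase (f p) := Multiset.erase_le_erase _ hm2
      obtain ⟨Q, R, hQR, hQ, hR⟩ := ih (m2.erase (f p)) (T.erase (f p)) hP hm2'
      refine ⟨p ::ₘ Q, R, by rw [hQR, Multiset.cons_add], ?_, ?_⟩
      · rw [← Multiset.cons_erase hb]
        simpa using Multiset.cons_le_cons (f p) hQ
      · refine hR.trans (le_of_eq ?_)
        ext a
        have h1 := Multiset.count_le_of_le a hm2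
        have hmem : 1 ≤ m2.count (f p) := Multiset.one_le_count_iff_mem.2 hb
        by_cases ha : a = f p <;>
          simp [Multiset.count_sub, ha, Multiset.count_erase_self,
            Multiset.count_erase_of_ne, *] <;> omega
    · have hm2' : m2 ≤ T.erase (f p) := by
        rw [Multiset.le_iff_count]
        intro a
        have h1 := Multiset.count_le_of_le a hm2
        by_cases ha : a = f p
        · have : m2.count (f p) = 0 := Multiset.count_eq_zero.2 hb
          simp [ha, Multiset.count_erase_self, this]
        · simpa [Multiset.count_erase_of_ne ha] using h1
      obtain ⟨Q, R, hQR, hQ, hR⟩ := ih m2 (T.erase (f p)) hP hm2'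
      refine ⟨Q, p ::ₘ R, ?_, hQ, ?_⟩
      · rw [hQR, Multiset.add_cons]
      · rw [Multiset.le_iff_count]
        intro a
        have hR' := Multiset.count_le_of_le a hR
        have hz : m2.count (f p) = 0 := Multiset.count_eq_zero.2 hb
        have hT : 1 ≤ T.count (f p) := Multiset.one_le_count_iff_mem.2 hp
        by_cases ha : a = f p
        · subst ha
          simp only [Multiset.count_sub, Multiset.count_erase_self] at hR'
          simp only [Multiset.map_cons, Multiset.count_cons_self, Multiset.count_sub]
          omega
        · simp only [Multiset.count_sub, Multiset.count_erase_of_ne ha] at hR'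
          simp only [Multiset.map_cons, Multiset.count_cons_of_ne ha, Multiset.count_sub]
          omega

lemma mpair {α β γ : Type*} [DecidableEq β] (f : α → γ) (g : β → γ) :
    ∀ (Q1 : Multiset α) (Q2 : Multiset β), Q1.map f = Q2.map g →
    ∃ C : Multiset (α × β), C.map Prod.fst = Q1 ∧ C.map Prod.snd = Q2 ∧
      ∀ c ∈ C, f c.1 = g c.2 := by
  intro Q1
  induction Q1 using Multiset.induction_on with
  | empty =>
    intro Q2 h
    have : Q2 = 0 := by
      have := h.symm; rwa [Multiset.map_zero, Multiset.map_eq_zero] at this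
    exact ⟨0, by simp, by simp [this], by simp⟩
  | cons a Q1 ih =>
    intro Q2 h
    have ha : f a ∈ Q2.map g := by rw [← h]; simp
    obtain ⟨b, hb, hfb⟩ := Multiset.mem_map.1 ha
    have hQ2 : Q2 = b ::ₘ Q2.erase b := (Multiset.cons_erase hb).symm
    rw [hQ2, Multiset.map_cons, Multiset.map_cons, hfb] at h
    have h' : Q1.map f = (Q2.erase b).map g := (Multiset.cons_inj_right _).1 h
    obtain ⟨C, hC1, hC2, hC3⟩ := ih (Q2.erase b) h'
    refine ⟨(a, b) ::ₘ C, by simp [hC1], by rw [hQ2]; simp [hC2], ?_⟩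
    intro c hc
    rcases Multiset.mem_cons.1 hc with rfl | hc
    · exact hfb.symm
    · exact hC3 c hc

lemma map_filter_comm {α β : Type*} (f : α → β) (p : β → Prop) [DecidablePred p]
    [DecidablePred fun a => p (f a)] (s : Multiset α) :
    (s.filter (fun a => p (f a))).map f = (s.map f).filter p := by
  induction s using Multiset.induction_on with
  | empty => simp
  | cons a s ih =>
    by_cases h : p (f a) <;>
      simp [Multiset.filter_cons, h, ih]

lemma minf_pos {m : Multiset ℝ≥0∞} (h : ∀ b ∈ m, 0 < b) : 0 < m.inf := by
  induction m using Multiset.induction_on with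
  | empty => simp
  | cons a s ih =>
    rw [Multiset.inf_cons]
    exact lt_inf_iff.2 ⟨h a (Multiset.mem_cons_self _ _),
      ih fun b hb => h b (Multiset.mem_cons_of_mem hb)⟩

lemma two_mul_lt {e l : ℝ≥0∞} (h : e < l / 2) : 2 * e < l := by
  by_cases hl : l = ⊤
  · subst hl
    have he : e ≠ ⊤ := by
      intro he; rw [he] at h; exact (not_top_lt h)
    exact lt_top_iff_ne_top.2 (ENNReal.mul_ne_top ENNReal.ofNat_ne_top he)
  · have h2 : 2 * e < 2 * (l / 2) :=
      (ENNReal.mul_lt_mul_iff_right two_ne_zero ENNReal.ofNat_ne_top).2 h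
    rwa [ENNReal.mul_div_cancel two_ne_zero ENNReal.ofNat_ne_top] at h2

/-! ### Matching lemmas -/

lemma matching_self (s : Multiset Bar) : IsPartialMatching s s 0 := by
  refine ⟨s.map fun I => (I, I), ?_, ?_, ?_, ?_, ?_⟩
  · simp [Multiset.map_map, Function.comp]
  · simp [Multiset.map_map, Function.comp]
  · intro p hp
    obtain ⟨I, _, rfl⟩ := Multiset.mem_map.1 hp
    simp [barDist_self]
  · simp [Multiset.map_map, Function.comp]
  · simp [Multiset.map_map, Function.comp]

lemma matching_swap {s t : Multiset Bar} {ε : ℝ≥0∞} (h : IsPartialMatching s t ε) :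
    IsPartialMatching t s ε := by
  obtain ⟨P, h1, h2, h3, h4, h5⟩ := h
  refine ⟨P.map Prod.swap, ?_, ?_, ?_, ?_, ?_⟩
  · simpa [Multiset.map_map, Function.comp] using h2
  · simpa [Multiset.map_map, Function.comp] using h1
  · intro p hp
    obtain ⟨q, hq, rfl⟩ := Multiset.mem_map.1 hp
    simpa [barDist_comm] using h3 q hq
  · intro I hI
    refine h5 I ?_
    simpa [Multiset.map_map, Function.comp] using hI
  · intro I hI
    refine h4 I ?_
    simpa [Multiset.map_map, Function.comp] using hI

lemma matching_add_right {s t w : Multiset Bar} {ε : ℝ≥0∞}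
    (h : IsPartialMatching s t ε) (hw : ∀ I ∈ w, barLength I = 0) :
    IsPartialMatching s (t + w) ε := by
  obtain ⟨P, h1, h2, h3, h4, h5⟩ := h
  refine ⟨P, h1, h2.trans (Multiset.le_add_right _ _), h3, h4, ?_⟩
  intro I hI
  have hdec : t + w - P.map Prod.snd = (t - P.map Prod.snd) + w := by
    ext a
    have hc := Multiset.le_iff_count.1 h2 a
    simp only [Multiset.count_sub, Multiset.count_add]
    omega
  rw [hdec, Multiset.mem_add] at hI
  rcases hI with hI | hI
  · exact h5 I hI
  · rw [hw I hI]; exact zero_le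

lemma matching_add_left {s t w : Multiset Bar} {ε : ℝ≥0∞}
    (h : IsPartialMatching s t ε) (hw : ∀ I ∈ w, barLength I = 0) :
    IsPartialMatching (s + w) t ε :=
  matching_swap (matching_add_right (matching_swap h) hw)

lemma matching_compose {s T u : Multiset Bar} {ε1 ε2 : ℝ≥0∞}
    (h1 : IsPartialMatching s T ε1) (h2 : IsPartialMatching T u ε2) :
    IsPartialMatching s u (ε1 + ε2) := by
  obtain ⟨P1, hP1s, hP1T, hP1d, hP1l, hP1r⟩ := h1
  obtain ⟨P2, hP2T, hP2u, hP2d, hP2l, hP2r⟩ := h2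
  obtain ⟨Q1, R1, hQR1, hQ1, hR1⟩ := msplit Prod.snd P1 (P2.map Prod.fst) T hP1T hP2T
  obtain ⟨Q2, R2, hQR2, hQ2f⟩ := mextract Prod.fst (Q1.map Prod.snd) P2 hQ1
  obtain ⟨C, hCQ1, hCQ2, hCeq⟩ := mpair Prod.snd Prod.fst Q1 Q2 hQ2f.symm
  have hQ1P1 : Q1 ≤ P1 := hQR1 ▸ Multiset.le_add_right _ _
  have hR1P1 : R1 ≤ P1 := hQR1 ▸ Multiset.le_add_left _ _
  have hQ2P2 : Q2 ≤ P2 := hQR2 ▸ Multiset.le_add_right _ _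
  have hR2P2 : R2 ≤ P2 := hQR2 ▸ Multiset.le_add_left _ _
  have hfst : (C.map fun c => (c.1.1, c.2.2)).map Prod.fst = Q1.map Prod.fst := by
    rw [← hCQ1]; simp [Multiset.map_map, Function.comp]
  have hsnd : (C.map fun c => (c.1.1, c.2.2)).map Prod.snd = Q2.map Prod.snd := by
    rw [← hCQ2]; simp [Multiset.map_map, Function.comp]
  refine ⟨C.map fun c => (c.1.1, c.2.2), ?_, ?_, ?_, ?_, ?_⟩
  · rw [hfst]
    exact le_trans (Multiset.map_le_map hQ1P1) hP1s
  · rw [hsnd]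
    exact le_trans (Multiset.map_le_map hQ2P2) hP2u
  · intro p hp
    obtain ⟨c, hc, rfl⟩ := Multiset.mem_map.1 hp
    have hc1 : c.1 ∈ P1 := Multiset.mem_of_le hQ1P1 (hCQ1 ▸ Multiset.mem_map_of_mem _ hc)
    have hc2 : c.2 ∈ P2 := Multiset.mem_of_le hQ2P2 (hCQ2 ▸ Multiset.mem_map_of_mem _ hc)
    calc barDist c.1.1 c.2.2 ≤ barDist c.1.1 c.1.2 + barDist c.1.2 c.2.2 := barDist_triangle _ _ _
      _ = barDist c.1.1 c.1.2 + barDist c.2.1 c.2.2 := by rw [hCeq c hc]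
      _ ≤ ε1 + ε2 := add_le_add (hP1d _ hc1) (hP2d _ hc2)
  · intro I hI
    rw [hfst] at hI
    have hPdec : P1.map Prod.fst = Q1.map Prod.fst + R1.map Prod.fst := by
      rw [hQR1, Multiset.map_add]
    have : s - Q1.map Prod.fst = (s - P1.map Prod.fst) + R1.map Prod.fst := by
      rw [msub_decomp _ (R1.map Prod.fst) s (hPdec ▸ hP1s), ← hPdec]
    rw [this, Multiset.mem_add] at hI
    rcases hI with hI | hI
    · exact le_trans (hP1l I hI) (mul_le_mul_right (le_add_right le_rfl) _)
    · obtain ⟨r, hr, rfl⟩ := Multiset.mem_map.1 hI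
      have hrP1 : r ∈ P1 := Multiset.mem_of_le hR1P1 hr
      have hr2 : r.2 ∈ T - P2.map Prod.fst :=
        Multiset.mem_of_le hR1 (Multiset.mem_map_of_mem _ hr)
      calc barLength r.1 ≤ barLength r.2 + 2 * barDist r.1 r.2 := barLength_le _ _
        _ ≤ 2 * ε2 + 2 * ε1 := add_le_add (hP2l _ hr2) (mul_le_mul_right (hP1d _ hrP1) _)
        _ = 2 * (ε1 + ε2) := by ring
  · intro I hI
    rw [hsnd] at hI
    have hPdec : P2.map Prod.snd = Q2.map Prod.snd + R2.map Prod.snd := by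
      rw [hQR2, Multiset.map_add]
    have : u - Q2.map Prod.snd = (u - P2.map Prod.snd) + R2.map Prod.snd := by
      rw [msub_decomp _ (R2.map Prod.snd) u (hPdec ▸ hP2u), ← hPdec]
    rw [this, Multiset.mem_add] at hI
    rcases hI with hI | hI
    · exact le_trans (hP2r I hI) (mul_le_mul_right (le_add_left le_rfl) _)
    · obtain ⟨r, hr, rfl⟩ := Multiset.mem_map.1 hI
      have hrP2 : r ∈ P2 := Multiset.mem_of_le hR2P2 hr
      have hkey : R2.map Prod.fst ≤ T - P1.map Prod.snd := by
        rw [Multiset.le_iff_count]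
        intro a
        have hA : (P1.map Prod.snd).count a
            = (Q1.map Prod.snd).count a + (R1.map Prod.snd).count a := by
          rw [hQR1, Multiset.map_add, Multiset.count_add]
        have hB : (P2.map Prod.fst).count a
            = (Q1.map Prod.snd).count a + (R2.map Prod.fst).count a := by
          rw [hQR2, Multiset.map_add, Multiset.count_add, hQ2f]
        have c1 := Multiset.count_le_of_le a hP1T
        have c3 := Multiset.count_le_of_le a hP2T
        have c2 := Multiset.count_le_of_le a hR1
        simp only [Multiset.count_sub] at c2 ⊢
        omega
      have hr1 : r.1 ∈ T - P1.map Prod.snd :=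
        Multiset.mem_of_le hkey (Multiset.mem_map_of_mem _ hr)
      calc barLength r.2 ≤ barLength r.1 + 2 * barDist r.2 r.1 := barLength_le _ _
        _ = barLength r.1 + 2 * barDist r.1 r.2 := by rw [barDist_comm]
        _ ≤ 2 * ε1 + 2 * ε2 := add_le_add (hP1r _ hr1) (mul_le_mul_right (hP2d _ hrP2) _)
        _ = 2 * (ε1 + ε2) := by ring

/-! ### Representation lemmas -/

lemma represents_self (B : Barcode) : Represents B.bars B :=
  ⟨fun I h => le_of_lt (B.nontrivial I h), Multiset.filter_eq_self.2 B.nontrivial⟩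

lemma triv_len {t : Multiset Bar} {B : Barcode} (ht : Represents t B) :
    ∀ I ∈ t.filter (fun I => ¬ I.1 < I.2), barLength I = 0 := by
  intro I hI
  obtain ⟨hIt, hInlt⟩ := Multiset.mem_filter.1 hI
  have : I.1 = I.2 := le_antisymm (ht.1 I hIt) (not_lt.1 hInlt)
  rw [barLength, this, erealDist_self]

lemma reduceBars_add (x y : Multiset Bar) :
    reduceBars (x + y) = reduceBars x + reduceBars y := Multiset.filter_add _ _ _

lemma dBot_key (A C D : Barcode) {e1 e2 : ℝ≥0∞}
    (h1 : ∃ s t, Represents s A ∧ Represents t C ∧ IsPartialMatching s t e1)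
    (h2 : ∃ s t, Represents s C ∧ Represents t D ∧ IsPartialMatching s t e2) :
    ∃ s t, Represents s A ∧ Represents t D ∧ IsPartialMatching s t (e1 + e2) := by
  obtain ⟨s, t, hs, ht, m1⟩ := h1
  obtain ⟨t', u, ht', hu, m2⟩ := h2
  set w := t.filter (fun I => ¬ I.1 < I.2) with hw
  set w' := t'.filter (fun I => ¬ I.1 < I.2) with hw'
  have et : reduceBars t + w = t := Multiset.filter_add_not _ t
  have et' : reduceBars t' + w' = t' := Multiset.filter_add_not _ t'
  have hTT : t + w' = t' + w := by
    conv_lhs => rw [← et]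
    conv_rhs => rw [← et']
    rw [ht.2, ht'.2, add_right_comm]
  have m1' : IsPartialMatching s (t + w') e1 := matching_add_right m1 (triv_len ht')
  have m2' : IsPartialMatching (t' + w) u e2 := matching_add_left m2 (triv_len ht)
  rw [hTT] at m1'
  exact ⟨s, u, hs, hu, matching_compose m1' m2'⟩

lemma dBot_symm (A C : Barcode) : dBot A C = dBot C A := by
  unfold dBot
  congr 1
  ext ε
  constructor
  · rintro ⟨s, t, hs, ht, m⟩; exact ⟨t, s, ht, hs, matching_swap m⟩
  · rintro ⟨s, t, hs, ht, m⟩; exact ⟨t, s, ht, hs, matching_swap m⟩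

lemma dBot_triangle (A C D : Barcode) : dBot A D ≤ dBot A C + dBot C D := by
  refine ENNReal.le_of_forall_pos_le_add ?_
  intro ε hε htop
  have hAC : dBot A C < ⊤ := lt_of_le_of_lt (le_add_right le_rfl) htop
  have hCD : dBot C D < ⊤ := lt_of_le_of_lt (le_add_left le_rfl) htop
  have hhalf : ((ε : ℝ≥0∞)) / 2 ≠ 0 := by
    simp [ENNReal.div_eq_zero_iff, hε.ne']
  have h1 : dBot A C < dBot A C + (ε : ℝ≥0∞) / 2 := ENNReal.lt_add_right hAC.ne hhalf
  have h2 : dBot C D < dBot C D + (ε : ℝ≥0∞) / 2 := ENNReal.lt_add_right hCD.ne hhalf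
  rw [dBot] at h1 h2
  obtain ⟨e1, he1S, he1⟩ := sInf_lt_iff.1 h1
  obtain ⟨e2, he2S, he2⟩ := sInf_lt_iff.1 h2
  simp only [Set.mem_setOf_eq] at he1S he2S
  have hc := dBot_key A C D he1S he2S
  have hle : dBot A D ≤ e1 + e2 := sInf_le hc
  calc dBot A D ≤ e1 + e2 := hle
    _ ≤ (dBot A C + (ε : ℝ≥0∞) / 2) + (dBot C D + (ε : ℝ≥0∞) / 2) :=
        add_le_add he1.le he2.le
    _ = dBot A C + dBot C D + ((ε : ℝ≥0∞) / 2 + (ε : ℝ≥0∞) / 2) := by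
        rw [add_add_add_comm]
    _ = dBot A C + dBot C D + ε := by rw [ENNReal.add_halves]

lemma dBot_sep {A C : Barcode} (h : dBot A C = 0) : A.bars ≤ C.bars := by
  classical
  set L : Multiset ℝ≥0∞ := (A.bars + C.bars).map (fun I => barLength I / 2) with hL
  set Dm : Multiset ℝ≥0∞ :=
    (A.bars.bind fun I => C.bars.map fun J => barDist I J).filter (fun d => d ≠ 0) with hDm
  have hpos : 0 < (L + Dm).inf := by
    apply minf_pos
    intro b hb
    rcases Multiset.mem_add.1 hb with hb | hb
    · obtain ⟨I, hI, rfl⟩ := Multiset.mem_map.1 hb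
      have hlt : I.1 < I.2 := by
        rcases Multiset.mem_add.1 hI with h' | h'
        exacts [A.nontrivial I h', C.nontrivial I h']
      have hne : barLength I ≠ 0 := fun h0 => ne_of_lt hlt (erealDist_eq_zero h0)
      simp [pos_iff_ne_zero, ENNReal.div_eq_zero_iff, hne]
    · have := (Multiset.mem_filter.1 hb).2
      simpa [pos_iff_ne_zero] using this
  have hlt0 : dBot A C < (L + Dm).inf := by rw [h]; exact hpos
  rw [dBot] at hlt0
  obtain ⟨e, heS, helt⟩ := sInf_lt_iff.1 hlt0
  simp only [Set.mem_setOf_eq] at heS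
  obtain ⟨s, t, hs, ht, P, hPs, hPt, hPd, hPl, hPr⟩ := heS
  have h2e : ∀ I ∈ A.bars + C.bars, 2 * e < barLength I := by
    intro I hI
    have hmem : barLength I / 2 ∈ L + Dm :=
      Multiset.mem_add.2 (Or.inl (Multiset.mem_map_of_mem _ hI))
    exact two_mul_lt (lt_of_lt_of_le helt (Multiset.inf_le hmem))
  have hd0 : ∀ I ∈ A.bars, ∀ J ∈ C.bars, barDist I J ≤ e → I = J := by
    intro I hI J hJ hle
    by_cases hd : barDist I J = 0
    · exact barDist_eq_zero hd
    · exfalso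
      have hmem : barDist I J ∈ L + Dm := by
        refine Multiset.mem_add.2 (Or.inr (Multiset.mem_filter.2 ⟨?_, hd⟩))
        exact Multiset.mem_bind.2 ⟨I, hI, Multiset.mem_map_of_mem _ hJ⟩
      exact lt_irrefl _ (lt_of_le_of_lt (le_trans (Multiset.inf_le hmem) hle) helt)
  set P' := P.filter (fun p => p.1.1 < p.1.2) with hP'
  have hmemP : ∀ p ∈ P', p ∈ P := fun p hp => (Multiset.mem_filter.1 hp).1
  have claim1 : ∀ p ∈ P', p.1 ∈ A.bars := by
    intro p hp
    have h1 : p.1 ∈ s := Multiset.mem_of_le hPs (Multiset.mem_map_of_mem _ (hmemP p hp))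
    have : p.1 ∈ reduceBars s := Multiset.mem_filter.2 ⟨h1, (Multiset.mem_filter.1 hp).2⟩
    rwa [hs.2] at this
  have claim2 : ∀ p ∈ P', p.2 ∈ C.bars := by
    intro p hp
    have h2 : p.2 ∈ t := Multiset.mem_of_le hPt (Multiset.mem_map_of_mem _ (hmemP p hp))
    have hlt2 : p.2.1 < p.2.2 := by
      by_contra hn
      have heq : p.2.1 = p.2.2 := le_antisymm (ht.1 _ h2) (not_lt.1 hn)
      have hlen0 : barLength p.2 = 0 := by rw [barLength, heq, erealDist_self]
      have hb : barLength p.1 ≤ 2 * e := by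
        calc barLength p.1 ≤ barLength p.2 + 2 * barDist p.1 p.2 := barLength_le _ _
          _ ≤ 0 + 2 * e := add_le_add hlen0.le (mul_le_mul_right (hPd _ (hmemP p hp)) _)
          _ = 2 * e := zero_add _
      exact absurd hb (not_le.2 (h2e p.1 (Multiset.mem_add.2 (Or.inl (claim1 p hp)))))
    have : p.2 ∈ reduceBars t := Multiset.mem_filter.2 ⟨h2, hlt2⟩
    rwa [ht.2] at this
  have claim3 : ∀ p ∈ P', p.1 = p.2 := fun p hp =>
    hd0 p.1 (claim1 p hp) p.2 (claim2 p hp) (hPd p (hmemP p hp))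
  have claim4 : reduceBars (s - P.map Prod.fst) = 0 := by
    rw [reduceBars, Multiset.filter_eq_nil]
    intro I hI hlt
    have hIs : I ∈ s := Multiset.mem_of_le tsub_le_self hI
    have hIA : I ∈ A.bars := by
      have : I ∈ reduceBars s := Multiset.mem_filter.2 ⟨hIs, hlt⟩
      rwa [hs.2] at this
    exact absurd (hPl I hI) (not_le.2 (h2e I (Multiset.mem_add.2 (Or.inl hIA))))
  have hsplit : P.map Prod.fst + (s - P.map Prod.fst) = s := by
    rw [add_comm]; exact tsub_add_cancel_of_le hPs
  have claim5 : A.bars = P'.map Prod.fst := by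
    have e5 : reduceBars s = reduceBars (P.map Prod.fst) := by
      conv_lhs => rw [← hsplit]
      rw [reduceBars_add, claim4, add_zero]
    have e6 : reduceBars (P.map Prod.fst) = P'.map Prod.fst := by
      rw [reduceBars, hP']
      exact (map_filter_comm Prod.fst (fun I => I.1 < I.2) P).symm
    rw [← hs.2, e5, e6]
  have claim6 : P'.map Prod.fst = P'.map Prod.snd := Multiset.map_congr rfl claim3
  have h7 : P'.map Prod.snd ≤ t :=
    le_trans (Multiset.map_le_map (Multiset.filter_le _ _)) hPt
  have h8 : (P'.map Prod.snd).filter (fun I => I.1 < I.2) = P'.map Prod.snd :=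
    Multiset.filter_eq_self.2 (by
      intro a ha
      obtain ⟨p, hp, rfl⟩ := Multiset.mem_map.1 ha
      exact C.nontrivial _ (claim2 p hp))
  calc A.bars = P'.map Prod.snd := by rw [claim5, claim6]
    _ = (P'.map Prod.snd).filter (fun I => I.1 < I.2) := h8.symm
    _ ≤ t.filter (fun I => I.1 < I.2) := Multiset.filter_le_filter _ h7
    _ = C.bars := ht.2

/-- The bottleneck distance is an extended metric on the set of finite barcodes:
reflexivity, symmetry, triangle inequality, and separation of points. -/
theorem stmt5 (B B1 B2 B3 : Barcode) :
    dBot B B = 0 ∧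
    dBot B1 B2 = dBot B2 B1 ∧
    dBot B1 B3 ≤ dBot B1 B2 + dBot B2 B3 ∧
    (dBot B1 B2 = 0 → B1 = B2) := by
  refine ⟨?_, dBot_symm B1 B2, dBot_triangle B1 B2 B3, ?_⟩
  · refine le_antisymm (sInf_le ?_) zero_le
    exact ⟨B.bars, B.bars, represents_self B, represents_self B, matching_self _⟩
  · intro h
    have h21 : dBot B2 B1 = 0 := (dBot_symm B1 B2) ▸ h
    have hbars : B1.bars = B2.bars := le_antisymm (dBot_sep h) (dBot_sep h21)
    cases B1; cases B2; simpa using hbars
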